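/- Let n ≥ 2, let Δ, Δ̂ : ZMod n → ℝ be nonnegative, let j be an index and v ≥ 0. Define the sequentially updated configurations Δ', Δ̂' by Δ'_{j−1} = Δ_{j−1} + min{v, Δ_j}, Δ'_j = Δ_j − min{v, Δ_j}, Δ'_k = Δ_k for k ∉ {j−1, j}, and analogously for Δ̂'. Then ∑_{i ∈ ZMod n} |Δ'_i − Δ̂'_i| ≤ ∑_{i ∈ ZMod n} |Δ_i − Δ̂_i|. -/

import Mathlib

/-- The sequential update of the gap process at index `j` with jump length `v`:
only coordinates `j - 1` and `j` change. -/
noncomputable def seqGapUpdate (n : ℕ) (j : ZMod n) (v : ℝ) (Δ : ZMod n → ℝ) :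
    ZMod n → ℝ :=
  fun k =>
    if k = j - 1 then Δ (j - 1) + min v (Δ j)
    else if k = j then Δ j - min v (Δ j)
    else Δ k

lemma seq_gap_key (v a b : ℝ) :
    |(a - min v a) - (b - min v b)| + |min v a - min v b| ≤ |a - b| := by
  rcases le_total v a with h1 | h1 <;> rcases le_total v b with h2 | h2
  · rw [min_eq_left h1, min_eq_left h2, sub_sub_sub_cancel_right, sub_self, abs_zero,
      add_zero]
  · rw [min_eq_left h1, min_eq_right h2, sub_self, sub_zero,
      abs_of_nonneg (by linarith : (0:ℝ) ≤ a - v),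
      abs_of_nonneg (by linarith : (0:ℝ) ≤ v - b),
      abs_of_nonneg (by linarith : (0:ℝ) ≤ a - b)]
    linarith
  · rw [min_eq_right h1, min_eq_left h2, sub_self, zero_sub, abs_neg,
      abs_of_nonneg (by linarith : (0:ℝ) ≤ b - v),
      abs_of_nonpos (by linarith : a - v ≤ 0),
      abs_of_nonpos (by linarith : a - b ≤ 0)]
    linarith
  · rw [min_eq_right h1, min_eq_right h2, sub_self, sub_self, sub_zero, abs_zero,
      zero_add]

/-- **Lemma 9 of the paper.**  A statically coupled sequential update of the gap
process at a single index `j` with a common jump length `v ≥ 0` does not increase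
the `ℓ¹`-distance between nonnegative gap configurations. -/
theorem seq_gap_update_l1_nonexpansive
    (n : ℕ) [NeZero n] (hn : 2 ≤ n) (Δ Δh : ZMod n → ℝ)
    (hΔ : ∀ i, 0 ≤ Δ i) (hΔh : ∀ i, 0 ≤ Δh i)
    (j : ZMod n) (v : ℝ) (hv : 0 ≤ v) :
    ∑ i : ZMod n, |seqGapUpdate n j v Δ i - seqGapUpdate n j v Δh i| ≤
      ∑ i : ZMod n, |Δ i - Δh i| := by
  haveI : Fact (1 < n) := ⟨hn⟩
  have hne : (j - 1 : ZMod n) ≠ j := by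
    intro h
    exact one_ne_zero (sub_eq_self.mp h)
  have hne' : j ≠ j - 1 := hne.symm
  rw [← Finset.sum_add_sum_compl ({j - 1, j} : Finset (ZMod n)),
      ← Finset.sum_add_sum_compl ({j - 1, j} : Finset (ZMod n))]
  have hcompl :
      ∀ i ∈ ({j - 1, j} : Finset (ZMod n))ᶜ,
        |seqGapUpdate n j v Δ i - seqGapUpdate n j v Δh i| = |Δ i - Δh i| := by
    intro i hi
    simp only [Finset.mem_compl, Finset.mem_insert, Finset.mem_singleton, not_or] at hi
    simp [seqGapUpdate, hi.1, hi.2]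
  rw [Finset.sum_congr rfl hcompl]
  refine add_le_add ?_ le_rfl
  rw [Finset.sum_pair hne, Finset.sum_pair hne]
  have e1 : seqGapUpdate n j v Δ (j - 1) = Δ (j - 1) + min v (Δ j) := by
    simp [seqGapUpdate]
  have e2 : seqGapUpdate n j v Δ j = Δ j - min v (Δ j) := by
    simp [seqGapUpdate, hne']
  have e3 : seqGapUpdate n j v Δh (j - 1) = Δh (j - 1) + min v (Δh j) := by
    simp [seqGapUpdate]
  have e4 : seqGapUpdate n j v Δh j = Δh j - min v (Δh j) := by
    simp [seqGapUpdate, hne']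
  rw [e1, e2, e3, e4]
  have key := seq_gap_key v (Δ j) (Δh j)
  have tri : |(Δ (j - 1) + min v (Δ j)) - (Δh (j - 1) + min v (Δh j))| ≤
      |Δ (j - 1) - Δh (j - 1)| + |min v (Δ j) - min v (Δh j)| := by
    have := abs_add_le (Δ (j - 1) - Δh (j - 1)) (min v (Δ j) - min v (Δh j))
    calc |(Δ (j - 1) + min v (Δ j)) - (Δh (j - 1) + min v (Δh j))|
        = |(Δ (j - 1) - Δh (j - 1)) + (min v (Δ j) - min v (Δh j))| := by ring_nf
      _ ≤ _ := this
  linarith
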